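/- Let M and C be real 3×3 matrices with M invertible, and let u, v ∈ ℝ³ be linearly independent. Define w(t) = ((M + tC)u) × ((M + tC)v) for t ∈ ℝ (so w(0) = (Mu) × (Mv) ≠ 0), let ν = w(0)/‖w(0)‖, and set B = C M⁻¹. Then the function t ↦ w(t)/‖w(t)‖ is differentiable at t = 0 and its derivative equals −( Bᵀ ν − ⟨Bᵀ ν, ν⟩ ν ), where ⟨·,·⟩ is the Euclidean inner product and × the cross product in ℝ³. -/

import Mathlib

open Matrix

private lemma cross_key (B : Matrix (Fin 3) (Fin 3) ℝ) (x y : Fin 3 → ℝ) :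
    crossProduct x (B.mulVec y) + crossProduct (B.mulVec x) y
      = B.trace • crossProduct x y - Bᵀ.mulVec (crossProduct x y) := by
  funext i
  fin_cases i <;>
    simp [crossProduct, Matrix.mulVec, Matrix.trace, dotProduct,
      Fin.sum_univ_three, Matrix.diag] <;> ring

open Matrix in
theorem stmt5 (M C : Matrix (Fin 3) (Fin 3) ℝ) (hM : IsUnit M)
    (u v : Fin 3 → ℝ) (huv : LinearIndependent ℝ ![u, v])
    (w : ℝ → Fin 3 → ℝ)
    (hw : ∀ t : ℝ, w t = crossProduct ((M + t • C).mulVec u) ((M + t • C).mulVec v))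
    (ν : Fin 3 → ℝ) (hν : ν = (Real.sqrt (w 0 ⬝ᵥ w 0))⁻¹ • w 0)
    (B : Matrix (Fin 3) (Fin 3) ℝ) (hB : B = C * M⁻¹) :
    HasDerivAt (fun t : ℝ => (Real.sqrt (w t ⬝ᵥ w t))⁻¹ • w t)
      (-(Bᵀ.mulVec ν - (Bᵀ.mulVec ν ⬝ᵥ ν) • ν)) 0 := by
  have hdet : IsUnit M.det := (Matrix.isUnit_iff_isUnit_det M).mp hM
  have hMN : M⁻¹ * M = 1 := Matrix.nonsing_inv_mul M hdet
  set a := M.mulVec u with ha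
  set c := M.mulVec v with hc
  set b := C.mulVec u with hbdef
  set d := C.mulVec v with hddef
  set w0 := crossProduct a c with hw0def
  set w2 := crossProduct b d with hw2def
  set w1 := crossProduct a d + crossProduct b c with hw1def
  -- polynomial expansion of w
  have hwt : ∀ t : ℝ, w t = w0 + t • w1 + (t * t) • w2 := by
    intro t
    rw [hw]
    simp only [Matrix.add_mulVec, Matrix.smul_mulVec, map_add, _root_.map_smul,
      LinearMap.add_apply, LinearMap.smul_apply, smul_add, hw0def, hw1def, hw2def,
      smul_smul]
    module
  have hw0 : w 0 = w0 := by simp [hwt 0]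
  -- b = B a, d = B c
  have hBM : B * M = C := by rw [hB, Matrix.mul_assoc, hMN, Matrix.mul_one]
  have hb : b = B.mulVec a := by rw [hbdef, ha, Matrix.mulVec_mulVec, hBM]
  have hd : d = B.mulVec c := by rw [hddef, hc, Matrix.mulVec_mulVec, hBM]
  -- key identity
  have hkey : w1 = B.trace • w0 - Bᵀ.mulVec w0 := by
    rw [hw1def, hb, hd, hw0def]; exact cross_key B a c
  -- linear independence and positivity
  have hinj : Function.Injective M.mulVec := by
    intro x y h
    have := congrArg (M⁻¹.mulVec) h
    simpa [Matrix.mulVec_mulVec, hMN] using this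
  have hlin : LinearIndependent ℝ ![a, c] := by
    have : ![a, c] = M.mulVecLin ∘ ![u, v] := by
      funext i; fin_cases i <;> rfl
    rw [this]
    exact huv.map' M.mulVecLin (LinearMap.ker_eq_bot.mpr hinj)
  have hw0ne : w0 ≠ 0 := crossProduct_ne_zero_iff_linearIndependent.mpr hlin
  have hknn : 0 ≤ w0 ⬝ᵥ w0 := by
    rw [dotProduct]
    exact Finset.sum_nonneg fun i _ => mul_self_nonneg _
  have hkpos : 0 < w0 ⬝ᵥ w0 := by
    rcases hknn.lt_or_eq with h | h
    · exact h
    · exact absurd ((dotProduct_self_eq_zero).mp h.symm) hw0ne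
  set s := Real.sqrt (w0 ⬝ᵥ w0) with hsdef
  have hs : 0 < s := Real.sqrt_pos.mpr hkpos
  have hss : s * s = w0 ⬝ᵥ w0 := Real.mul_self_sqrt hkpos.le
  -- derivatives
  have hdw : HasDerivAt w w1 0 := by
    have h1 : HasDerivAt (fun t : ℝ => w0 + t • w1 + (t * t) • w2) w1 0 := by
      have h2 := (hasDerivAt_id (0 : ℝ)).smul_const w1
      have h3 := ((hasDerivAt_id (0 : ℝ)).mul (hasDerivAt_id 0)).smul_const w2
      simpa using ((hasDerivAt_const (0 : ℝ) w0).fun_add h2).fun_add h3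
    have hfe : w = fun t => w0 + t • w1 + (t * t) • w2 := funext hwt
    rw [hfe]; exact h1
  have hci : ∀ i, HasDerivAt (fun t => w t i) (w1 i) 0 := hasDerivAt_pi.mp hdw
  have hdg : HasDerivAt (fun t => w t ⬝ᵥ w t) (2 * (w0 ⬝ᵥ w1)) 0 := by
    have := HasDerivAt.fun_sum (fun i (_ : i ∈ Finset.univ) => (hci i).fun_mul (hci i))
    have heq : (fun t => w t ⬝ᵥ w t) = fun t => ∑ i : Fin 3, w t i * w t i := by
      funext t; rw [dotProduct]
    rw [heq]
    refine this.congr_deriv (Eq.symm ?_)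
    rw [dotProduct, Finset.mul_sum, hw0]
    exact Finset.sum_congr rfl fun i _ => by ring
  have hg0ne : w 0 ⬝ᵥ w 0 ≠ 0 := by rw [hw0]; exact hkpos.ne'
  have hds : HasDerivAt (fun t => Real.sqrt (w t ⬝ᵥ w t)) (2 * (w0 ⬝ᵥ w1) / (2 * Real.sqrt (w 0 ⬝ᵥ w 0))) 0 :=
    hdg.sqrt hg0ne
  have hsne : Real.sqrt (w 0 ⬝ᵥ w 0) ≠ 0 := by rw [hw0]; exact hs.ne'
  have hdi := hds.fun_inv hsne
  have hfinal := hdi.fun_smul hdw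
  refine hfinal.congr_deriv (Eq.symm ?_)
  rw [hν, hw0, hkey, ← hsdef]
  funext i
  simp only [Matrix.mulVec_smul, Pi.smul_apply, Pi.neg_apply, Pi.sub_apply, Pi.add_apply,
    dotProduct_smul, smul_dotProduct, smul_eq_mul,
    dotProduct_sub, sub_dotProduct, dotProduct_smul]
  rw [← hss]
  have hc1 : w0 ⬝ᵥ Bᵀ.mulVec w0 = Bᵀ.mulVec w0 ⬝ᵥ w0 := dotProduct_comm _ _
  field_simp
  ring_nf
  rw [hc1]; ring
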